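/- arXiv:1911.01423 — 6 statements merged into one kernel-verified Lean document; each statement's English description precedes it below -/
import Mathlib

section
/- For real numbers a > b > 0 and every nonnegative integer n, the integral from 0 to 1 of x^n (1-x)^n / ((x+a)(x+b))^(n+1) dx equals the integral from 0 to 1 of x^n (1-x)^n / ((a-b)x + (a+1)b)^(n+1) dx. -/
open Set intervalIntegral

theorem stmt0 (a b : ℝ) (hb : 0 < b) (hab : b < a) (n : ℕ) :
    ∫ x in (0:ℝ)..1, x ^ n * (1 - x) ^ n / ((x + a) * (x + b)) ^ (n + 1)
      = ∫ x in (0:ℝ)..1, x ^ n * (1 - x) ^ n / ((a - b) * x + (a + 1) * b) ^ (n + 1) := by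
  have ha : 0 < a := lt_trans hb hab
  set g : ℝ → ℝ := fun x => x ^ n * (1 - x) ^ n / ((x + a) * (x + b)) ^ (n + 1) with hg
  set φ : ℝ → ℝ := fun u => b * (1 - u) / (u + b) with hφ
  set φ' : ℝ → ℝ := fun u => -(b * (b + 1)) / (u + b) ^ 2 with hφ'
  have hI : Set.uIcc (0:ℝ) 1 = Set.Icc 0 1 := Set.uIcc_of_le zero_le_one
  have hvpos : ∀ u ∈ Set.Icc (0:ℝ) 1, 0 < u + b := fun u hu => by
    have := hu.1; linarith
  have hderiv : ∀ u ∈ Set.uIcc (0:ℝ) 1, HasDerivAt φ (φ' u) u := by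
    intro u hu
    rw [hI] at hu
    have hv := hvpos u hu
    have h1 : HasDerivAt (fun u : ℝ => b * (1 - u)) (-b) u := by
      simpa using ((hasDerivAt_id u).const_sub 1).const_mul b
    have h2 : HasDerivAt (fun u : ℝ => u + b) 1 u := by
      simpa using (hasDerivAt_id u).add_const b
    have := h1.div h2 (ne_of_gt hv)
    have hnum : -b * (u + b) - b * (1 - u) * 1 = -(b * (b + 1)) := by ring
    rw [hnum] at this
    exact this
  have hφ'cont : ContinuousOn φ' (Set.uIcc (0:ℝ) 1) := by
    rw [hI]
    apply ContinuousOn.div continuousOn_const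
    · fun_prop
    · intro u hu
      exact pow_ne_zero 2 (ne_of_gt (hvpos u hu))
  have himg : φ '' Set.uIcc (0:ℝ) 1 ⊆ Set.Icc 0 1 := by
    rw [hI]
    rintro _ ⟨u, hu, rfl⟩
    have hv := hvpos u hu
    constructor
    · exact div_nonneg (by nlinarith [hu.2]) (le_of_lt hv)
    · rw [div_le_one hv]
      nlinarith [hu.1]
  have hgcont : ContinuousOn g (φ '' Set.uIcc (0:ℝ) 1) := by
    apply ContinuousOn.mono _ himg
    apply ContinuousOn.div (by fun_prop) (by fun_prop)
    intro x hx
    apply pow_ne_zero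
    have h1 : 0 < x + a := by have := hx.1; linarith
    have h2 : 0 < x + b := by have := hx.1; linarith
    positivity
  have hsub := integral_comp_smul_deriv' hderiv hφ'cont hgcont
  have hφ0 : φ 0 = 1 := by
    simp only [hφ]
    field_simp
    ring
  have hφ1 : φ 1 = 0 := by simp [hφ]
  rw [hφ0, hφ1] at hsub
  have hsub2 : (∫ u in (0:ℝ)..1, φ' u • (g ∘ φ) u) = -∫ x in (0:ℝ)..1, g x := by
    rw [hsub]; exact intervalIntegral.integral_symm 0 1
  have hpt : Set.EqOn
      (fun x => x ^ n * (1 - x) ^ n / ((a - b) * x + (a + 1) * b) ^ (n + 1))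
      (fun u => -(φ' u • (g ∘ φ) u)) (Set.uIcc (0:ℝ) 1) := by
    intro u hu
    rw [hI] at hu
    have hv := hvpos u hu
    have hD : 0 < (a - b) * u + (a + 1) * b := by nlinarith [hu.1]
    simp only [hφ', hg, hφ, Function.comp, smul_eq_mul]
    have e1 : b * (1 - u) / (u + b) + a = ((a - b) * u + (a + 1) * b) / (u + b) := by
      field_simp; ring
    have e2 : b * (1 - u) / (u + b) + b = b * (b + 1) / (u + b) := by
      field_simp; ring
    have e3 : 1 - b * (1 - u) / (u + b) = u * (b + 1) / (u + b) := by
      field_simp; ring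
    rw [e1, e2, e3]
    have hb1 : (b:ℝ) + 1 ≠ 0 := by linarith
    simp only [div_mul_div_comm, div_pow, mul_pow]
    field_simp
    ring
  rw [intervalIntegral.integral_congr hpt, intervalIntegral.integral_neg, hsub2, neg_neg]
end

section
/- For real a > b > 0, the integral from 0 to 1 of x(1-x) / ((x+a)(x+b))^2 dx equals the integral from 0 to 1 of x(1-x) / ((a-b)x + (a+1)b)^2 dx. -/
set_option maxHeartbeats 1000000

open Set intervalIntegral

theorem stmt2 (a b : ℝ) (hb : 0 < b) (hab : b < a) :
    ∫ x in (0:ℝ)..1, x * (1 - x) / ((x + a) * (x + b)) ^ 2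
      = ∫ x in (0:ℝ)..1, x * (1 - x) / ((a - b) * x + (a + 1) * b) ^ 2 := by
  have ha : 0 < a := hb.trans hab
  set g : ℝ → ℝ := fun x => x * (1 - x) / ((x + a) * (x + b)) ^ 2 with hg_def
  set f : ℝ → ℝ := fun t => b * (1 - t) / (t + b) with hf_def
  set f' : ℝ → ℝ := fun t => -(b * (1 + b)) / (t + b) ^ 2 with hf'_def
  have huIcc : uIcc (0:ℝ) 1 = Icc 0 1 := uIcc_of_le (by norm_num)
  have htb : ∀ t : ℝ, t ∈ Icc (0:ℝ) 1 → 0 < t + b := fun t ht => by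
    have := ht.1; linarith
  -- derivative of f
  have hderiv : ∀ t ∈ uIcc (0:ℝ) 1, HasDerivAt f (f' t) t := by
    intro t ht
    rw [huIcc] at ht
    have htb' : t + b ≠ 0 := (htb t ht).ne'
    have h1 : HasDerivAt (fun t : ℝ => b * (1 - t)) (b * (-1)) t :=
      (((hasDerivAt_id t).const_sub 1)).const_mul b
    have h2 : HasDerivAt (fun t : ℝ => t + b) 1 t := (hasDerivAt_id t).add_const b
    have h3 := h1.div h2 htb'
    have h4 : (b * -1 * (t + b) - b * (1 - t) * 1) / (t + b) ^ 2 = f' t := by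
      rw [hf'_def]; congr 1; ring
    exact h4 ▸ h3
  have hcont' : ContinuousOn f' (uIcc (0:ℝ) 1) := by
    rw [huIcc]
    apply ContinuousOn.div continuousOn_const (by fun_prop)
    intro t ht
    exact pow_ne_zero _ (htb t ht).ne'
  -- f maps [0,1] into [0,1]
  have himg : f '' uIcc (0:ℝ) 1 ⊆ Icc 0 1 := by
    rw [huIcc]
    rintro y ⟨t, ht, rfl⟩
    have h1 := ht.1
    have h2 := ht.2
    have htb' := htb t ht
    constructor
    · apply div_nonneg _ htb'.le
      nlinarith
    · rw [div_le_one htb']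
      nlinarith
  have hgcont : ContinuousOn g (f '' uIcc (0:ℝ) 1) := by
    apply ContinuousOn.mono _ himg
    apply ContinuousOn.div (by fun_prop) (by fun_prop)
    intro x hx
    have hxa : 0 < x + a := by have := hx.1; linarith
    have hxb : 0 < x + b := by have := hx.1; linarith
    positivity
  have key := integral_comp_smul_deriv' hderiv hcont' hgcont
  have hf0 : f 0 = 1 := by
    simp only [hf_def]
    field_simp
    ring
  have hf1 : f 1 = 0 := by simp [hf_def]
  rw [hf0, hf1] at key
  -- the transformed integrand equals the RHS integrand (up to sign)
  have hcongr : ∀ t ∈ uIcc (0:ℝ) 1,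
      f' t • (g ∘ f) t = -(t * (1 - t) / ((a - b) * t + (a + 1) * b) ^ 2) := by
    intro t ht
    rw [huIcc] at ht
    have htb' : 0 < t + b := htb t ht
    have hL : 0 < (a - b) * t + (a + 1) * b := by nlinarith [ht.1]
    have hfa : 0 < f t + a := by
      rw [hf_def]
      have : b * (1 - t) / (t + b) + a = ((a - b) * t + (a + 1) * b) / (t + b) := by
        field_simp; ring
      rw [this]
      positivity
    have hfb : 0 < f t + b := by
      rw [hf_def]
      have : b * (1 - t) / (t + b) + b = (b * (1 + b)) / (t + b) := by
        field_simp; ring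
      rw [this]
      positivity
    simp only [Function.comp, hg_def, hf_def, hf'_def, smul_eq_mul]
    rw [hf_def] at hfa hfb
    have h4 : b * (1 - t) / (t + b) + a = ((a - b) * t + (a + 1) * b) / (t + b) := by
      field_simp; ring
    have h5 : b * (1 - t) / (t + b) + b = b * (1 + b) / (t + b) := by
      field_simp; ring
    have h6 : 1 - b * (1 - t) / (t + b) = t * (1 + b) / (t + b) := by
      field_simp; ring
    rw [h4, h5, h6]
    have h7 := htb'.ne'
    have h8 := hL.ne'
    field_simp
  have hint : ∫ t in (0:ℝ)..1, f' t • (g ∘ f) t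
      = ∫ t in (0:ℝ)..1, -(t * (1 - t) / ((a - b) * t + (a + 1) * b) ^ 2) :=
    integral_congr hcongr
  rw [hint, intervalIntegral.integral_neg] at key
  have : ∫ x in (1:ℝ)..0, g x = -∫ x in (0:ℝ)..1, g x := intervalIntegral.integral_symm 0 1
  rw [this] at key
  linarith
end

section
/- Fix real a > b > 0 and let F(n,x) = x^n (1-x)^n / ((x+a)(x+b))^(n+1), and R1(x) = x(x-1)((a+b+1)x^2 + 2abx - ab) / ((x+b)(x+a)). Then for every nonnegative integer n and every x in [0,1], (n+1)F(n,x) - (2n+3)(2ab+a+b)F(n+1,x) + (a-b)^2 (n+2) F(n+2,x) equals the derivative with respect to x of R1(x)F(n,x). -/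
theorem stmt3 (a b : ℝ) (hb : 0 < b) (hab : b < a)
    (F : ℕ → ℝ → ℝ)
    (hF : ∀ n x, F n x = x ^ n * (1 - x) ^ n / ((x + a) * (x + b)) ^ (n + 1))
    (R1 : ℝ → ℝ)
    (hR1 : ∀ x, R1 x = x * (x - 1) * ((a + b + 1) * x ^ 2 + 2 * a * b * x - a * b)
        / ((x + b) * (x + a)))
    (n : ℕ) (x : ℝ) (hx : x ∈ Set.Icc (0:ℝ) 1) :
    HasDerivAt (fun y => R1 y * F n y)
      ((n + 1) * F n x - (2 * n + 3) * (2 * a * b + a + b) * F (n + 1) x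
        + (a - b) ^ 2 * (n + 2) * F (n + 2) x) x := by
  obtain ⟨hx0, hx1⟩ := hx
  have hxa : (0:ℝ) < x + a := by linarith
  have hxb : (0:ℝ) < x + b := by linarith
  have hxa' : x + a ≠ 0 := ne_of_gt hxa
  have hxb' : x + b ≠ 0 := ne_of_gt hxb
  have hv0 : ((x + a) * (x + b)) ^ (n + 2) ≠ 0 := by positivity
  -- the explicit rational function
  have hfun : (fun y => R1 y * F n y)
      = fun y => -(y ^ (n+1) * (1 - y) ^ (n+1) * ((a + b + 1) * y ^ 2 + 2 * a * b * y - a * b))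
          / ((y + a) * (y + b)) ^ (n + 2) := by
    funext y
    rw [hR1, hF, div_mul_div_comm]
    congr 1 <;> ring
  -- derivatives of pieces
  have h1 : HasDerivAt (fun y : ℝ => y ^ (n+1)) ((n+1) * x ^ n) x := by
    simpa using hasDerivAt_pow (n+1) x
  have h2 : HasDerivAt (fun y : ℝ => (1 - y) ^ (n+1)) (-((n+1) * (1 - x) ^ n)) x := by
    have := ((hasDerivAt_const x (1:ℝ)).fun_sub (hasDerivAt_id x)).fun_pow (n+1)
    simpa using this
  have h3 : HasDerivAt (fun y : ℝ => (a + b + 1) * y ^ 2 + 2 * a * b * y - a * b)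
      ((a + b + 1) * (2 * x) + 2 * a * b) x := by
    have hp : HasDerivAt (fun y : ℝ => y ^ 2) (2 * x) x := by
      simpa using hasDerivAt_pow 2 x
    simpa using (((hp.const_mul (a + b + 1)).add
      ((hasDerivAt_id x).const_mul (2 * a * b))).sub_const (a * b))
  have h4 : HasDerivAt (fun y : ℝ => ((y + a) * (y + b)) ^ (n + 2))
      ((n + 2) * ((x + a) * (x + b)) ^ (n + 1) * ((x + a) + (x + b))) x := by
    have hm : HasDerivAt (fun y : ℝ => (y + a) * (y + b)) ((x + a) + (x + b)) x := by
      have := (((hasDerivAt_id x).add_const a).fun_mul ((hasDerivAt_id x).add_const b))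
      simpa [mul_comm, add_comm] using this
    have := hm.fun_pow (n + 2)
    simpa [mul_comm, mul_assoc, mul_left_comm] using this
  have hnum := ((h1.fun_mul h2).fun_mul h3).fun_neg
  have hg := hnum.fun_div h4 hv0
  rw [hfun]
  refine hg.congr_deriv ?_
  symm
  rw [hF, hF, hF]
  have e1 : ((x + a) * (x + b)) ^ (n + 1 + 1) = ((x + a) * (x + b)) ^ (n + 1) * ((x + a) * (x + b)) := by
    ring
  have e2 : ((x + a) * (x + b)) ^ (n + 2 + 1) = ((x + a) * (x + b)) ^ (n + 1) * ((x + a) * (x + b)) ^ 2 := by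
    ring
  field_simp
  ring
end

section
/- For real a > b > 0 and nonnegative integer n, let L(n) = integral from 0 to 1 of x^n (1-x)^n / ((x+a)(x+b))^(n+1) dx. Then (n+1)L(n) - (2n+3)(2ab+a+b)L(n+1) + (a-b)^2 (n+2) L(n+2) = 0. -/
theorem stmt5 (a b : ℝ) (hb : 0 < b) (hab : b < a)
    (L : ℕ → ℝ)
    (hL : ∀ n, L n = ∫ x in (0:ℝ)..1, x ^ n * (1 - x) ^ n / ((x + a) * (x + b)) ^ (n + 1))
    (n : ℕ) :
    (n + 1) * L n - (2 * n + 3) * (2 * a * b + a + b) * L (n + 1)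
      + (a - b) ^ 2 * (n + 2) * L (n + 2) = 0 := by
  have hpos : ∀ x : ℝ, x ∈ Set.uIcc (0:ℝ) 1 → 0 < (x + a) * (x + b) := by
    intro x hx
    rw [Set.uIcc_of_le (by norm_num)] at hx
    have h1 : 0 ≤ x := hx.1
    nlinarith
  set g : ℝ → ℝ := fun x =>
    x ^ (n+1) * (1 - x) ^ (n+1) * (a*b - 2*a*b*x - (1+a+b)*x^2) / ((x+a)*(x+b)) ^ (n+2)
    with hg
  set F : ℝ → ℝ := fun x =>
    ((n:ℝ)+1) * (x ^ n * (1-x) ^ n / ((x+a)*(x+b)) ^ (n+1))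
      - (2*(n:ℝ)+3)*(2*a*b+a+b) * (x ^ (n+1) * (1-x) ^ (n+1) / ((x+a)*(x+b)) ^ (n+1+1))
      + (a-b)^2*((n:ℝ)+2) * (x ^ (n+2) * (1-x) ^ (n+2) / ((x+a)*(x+b)) ^ (n+2+1))
    with hF
  have hderiv : ∀ x ∈ Set.uIcc (0:ℝ) 1, HasDerivAt g (F x) x := by
    intro x hx
    have hPx : (x + a) * (x + b) ≠ 0 := (hpos x hx).ne'
    have h1 : HasDerivAt (fun y : ℝ => y ^ (n+1)) ((↑(n+1) : ℝ) * x ^ n) x := by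
      simpa using hasDerivAt_pow (n+1) x
    have h2 : HasDerivAt (fun y : ℝ => (1 - y) ^ (n+1))
        ((↑(n+1) : ℝ) * (1-x) ^ n * (-1)) x := by
      have := ((hasDerivAt_id x).const_sub 1).fun_pow (n+1)
      simpa using this
    have hQ : HasDerivAt (fun y : ℝ => a*b - 2*a*b*y - (1+a+b)*y^2)
        (0 - 2*a*b*1 - (1+a+b)*(2*x^1)) x := by
      exact (((hasDerivAt_const x (a*b)).sub
        (((hasDerivAt_id x)).const_mul (2*a*b)))).sub
        (((hasDerivAt_pow 2 x)).const_mul (1+a+b))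
    have hD : HasDerivAt (fun y : ℝ => ((y+a)*(y+b)) ^ (n+2))
        ((↑(n+2) : ℝ) * ((x+a)*(x+b)) ^ (n+1) * (1*(x+b) + (x+a)*1)) x := by
      have hbase : HasDerivAt (fun y : ℝ => (y+a)*(y+b)) (1*(x+b) + (x+a)*1) x :=
        ((hasDerivAt_id x).add_const a).mul ((hasDerivAt_id x).add_const b)
      simpa using hbase.fun_pow (n+2)
    have hnum := (h1.fun_mul h2).fun_mul hQ
    have hder := hnum.fun_div hD (pow_ne_zero _ hPx)
    convert hder using 1
    case e'_4 => rfl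
    case e'_5 => rfl
    rw [hF]
    have hne : ((x+a)*(x+b)) ≠ 0 := hPx
    have hQn : ((x+a)*(x+b)) ^ n ≠ 0 := pow_ne_zero _ hne
    simp only [pow_add, pow_one, Nat.cast_add, Nat.cast_one, Nat.cast_ofNat]
    generalize ((x+a)*(x+b)) ^ n = Q at hQn ⊢
    generalize x ^ n = X
    generalize (1 - x) ^ n = Y
    field_simp
    ring
  have hcont : ∀ m : ℕ, IntervalIntegrable
      (fun x : ℝ => x ^ m * (1-x) ^ m / ((x+a)*(x+b)) ^ (m+1))
      MeasureTheory.volume 0 1 := by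
    intro m
    apply ContinuousOn.intervalIntegrable
    apply ContinuousOn.div
    · exact (Continuous.continuousOn (by continuity))
    · exact (Continuous.continuousOn (by continuity))
    · intro x hx
      exact pow_ne_zero _ (hpos x hx).ne'
  have hFint : IntervalIntegrable F MeasureTheory.volume 0 1 := by
    rw [hF]
    exact (((hcont n).const_mul _).sub ((hcont (n+1)).const_mul _)).add
      ((hcont (n+2)).const_mul _)
  have hint : ∫ x in (0:ℝ)..1, F x = g 1 - g 0 :=
    intervalIntegral.integral_eq_sub_of_hasDerivAt hderiv hFint
  have hg0 : g 0 = 0 := by simp [hg]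
  have hg1 : g 1 = 0 := by simp [hg]
  have hFzero : ∫ x in (0:ℝ)..1, F x = 0 := by rw [hint, hg0, hg1]; ring
  rw [hL n, hL (n+1), hL (n+2)]
  rw [← intervalIntegral.integral_const_mul, ← intervalIntegral.integral_const_mul,
    ← intervalIntegral.integral_const_mul,
    ← intervalIntegral.integral_sub ((hcont n).const_mul _) ((hcont (n+1)).const_mul _),
    ← intervalIntegral.integral_add
      (((hcont n).const_mul _).sub ((hcont (n+1)).const_mul _))
      ((hcont (n+2)).const_mul _)]
  rw [← hFzero]
  congr 1
end

section
/- For real a > b > 0 and nonnegative integer n, let R(n) = integral from 0 to 1 of x^n (1-x)^n / ((a-b)x + (a+1)b)^(n+1) dx. Then (n+1)R(n) - (2n+3)(2ab+a+b)R(n+1) + (a-b)^2 (n+2) R(n+2) = 0. -/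
theorem stmt6 (a b : ℝ) (hb : 0 < b) (hab : b < a)
    (R : ℕ → ℝ)
    (hR : ∀ n, R n = ∫ x in (0:ℝ)..1,
        x ^ n * (1 - x) ^ n / ((a - b) * x + (a + 1) * b) ^ (n + 1))
    (n : ℕ) :
    (n + 1) * R n - (2 * n + 3) * (2 * a * b + a + b) * R (n + 1)
      + (a - b) ^ 2 * (n + 2) * R (n + 2) = 0 := by
  have hD : ∀ x ∈ Set.uIcc (0:ℝ) 1, ((a - b) * x + (a + 1) * b) ≠ 0 := by
    intro x hx
    rw [Set.uIcc_of_le (by norm_num)] at hx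
    nlinarith [hx.1, hx.2]
  set f : ℕ → ℝ → ℝ := fun m x => x ^ m * (1 - x) ^ m /
      ((a - b) * x + (a + 1) * b) ^ (m + 1) with hf
  have hcont : ∀ m, ContinuousOn (f m) (Set.uIcc (0:ℝ) 1) := by
    intro m
    apply ContinuousOn.div (by fun_prop) (by fun_prop)
    intro x hx
    exact pow_ne_zero _ (hD x hx)
  have hint : ∀ m, IntervalIntegrable (f m) MeasureTheory.volume 0 1 :=
    fun m => (hcont m).intervalIntegrable
  -- the combined integrand
  set φ : ℝ → ℝ := fun x => (n + 1 : ℝ) * f n x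
      - (2 * n + 3 : ℝ) * (2 * a * b + a + b) * f (n + 1) x
      + (a - b) ^ 2 * (n + 2 : ℝ) * f (n + 2) x with hφ
  have hRm : ∀ m, R m = ∫ x in (0:ℝ)..1, f m x := fun m => hR m
  have key : (∫ x in (0:ℝ)..1, φ x) = 0 := by
    -- antiderivative
    set g : ℝ → ℝ := fun x => x ^ (n + 1) * (1 - x) ^ (n + 1) *
        (b * (a + 1) * (1 - 2 * x) - (a - b) * x ^ 2) /
        ((a - b) * x + (a + 1) * b) ^ (n + 2) with hg
    have hderiv : ∀ x ∈ Set.uIcc (0:ℝ) 1, HasDerivAt g (φ x) x := by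
      intro x hx
      have hDx := hD x hx
      have h1 : HasDerivAt (fun x : ℝ => x ^ (n + 1))
          (((n : ℝ) + 1) * x ^ n) x := by
        simpa using hasDerivAt_pow (n + 1) x
      have h2 : HasDerivAt (fun x : ℝ => (1 - x) ^ (n + 1))
          (-(((n : ℝ) + 1) * (1 - x) ^ n)) x := by
        have := ((hasDerivAt_id x).const_sub 1).fun_pow (n + 1)
        simpa using this
      have h3 : HasDerivAt (fun x : ℝ => b * (a + 1) * (1 - 2 * x) - (a - b) * x ^ 2)
          (b * (a + 1) * (-2) - (a - b) * (2 * x)) x := by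
        have ha : HasDerivAt (fun x : ℝ => b * (a + 1) * (1 - 2 * x))
            (b * (a + 1) * (-2)) x := by
          have : HasDerivAt (fun x : ℝ => 1 - 2 * x) (-2) x := by
            simpa using ((hasDerivAt_id x).const_mul 2).const_sub 1
          exact this.const_mul _
        have hc : HasDerivAt (fun x : ℝ => (a - b) * x ^ 2)
            ((a - b) * (2 * x)) x := by
          have := (hasDerivAt_pow 2 x).const_mul (a - b)
          simpa [mul_comm, mul_assoc, mul_left_comm] using this
        exact ha.sub hc
      have hnum := (h1.fun_mul h2).fun_mul h3
      have hden : HasDerivAt (fun x : ℝ => ((a - b) * x + (a + 1) * b) ^ (n + 2))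
          (((n : ℝ) + 2) * ((a - b) * x + (a + 1) * b) ^ (n + 1) * (a - b)) x := by
        have hbase : HasDerivAt (fun x : ℝ => (a - b) * x + (a + 1) * b) (a - b) x := by
          simpa using ((hasDerivAt_id x).const_mul (a - b)).add_const ((a + 1) * b)
        have := hbase.fun_pow (n + 2)
        simpa [mul_comm, mul_assoc, mul_left_comm] using this
      have hq := hnum.fun_div hden (pow_ne_zero _ hDx)
      refine hq.congr_deriv (Eq.symm ?_)
      simp only [hφ, hf]
      have h2' : ((a - b) * x + (a + 1) * b) ^ (n + 2) ≠ 0 := pow_ne_zero _ hDx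
      rw [eq_div_iff (pow_ne_zero 2 h2')]
      simp only [pow_succ, div_eq_mul_inv, mul_inv]
      field_simp
      ring
    have hφint : IntervalIntegrable φ MeasureTheory.volume 0 1 := by
      apply IntervalIntegrable.add
      apply IntervalIntegrable.sub
      · exact (hint n).const_mul _
      · exact (hint (n + 1)).const_mul _
      · exact (hint (n + 2)).const_mul _
    have := intervalIntegral.integral_eq_sub_of_hasDerivAt hderiv hφint
    rw [this]
    simp [hg]
  have comb : (∫ x in (0:ℝ)..1, φ x)
      = (n + 1 : ℝ) * (∫ x in (0:ℝ)..1, f n x)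
        - (2 * n + 3 : ℝ) * (2 * a * b + a + b) * (∫ x in (0:ℝ)..1, f (n + 1) x)
        + (a - b) ^ 2 * (n + 2 : ℝ) * (∫ x in (0:ℝ)..1, f (n + 2) x) := by
    rw [hφ]
    rw [intervalIntegral.integral_add (((hint n).const_mul _).sub ((hint (n + 1)).const_mul _))
        ((hint (n + 2)).const_mul _),
      intervalIntegral.integral_sub ((hint n).const_mul _) ((hint (n + 1)).const_mul _),
      intervalIntegral.integral_const_mul, intervalIntegral.integral_const_mul,
      intervalIntegral.integral_const_mul]
  rw [hRm n, hRm (n + 1), hRm (n + 2)]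
  rw [← comb]
  exact key
end

section
/- For real a > b > 0, the map x ↦ b(1-x)/(b+x) is a differentiable bijection from [0,1] to [0,1] (reversing orientation), and substituting u = b(1-x)/(b+x) transforms the integrand x^n(1-x)^n/((x+a)(x+b))^(n+1) dx into u^n(1-u)^n/((a-b)u + (a+1)b)^(n+1) du, establishing that the integral from 0 to 1 of x^n (1-x)^n / ((x+a)(x+b))^(n+1) dx equals the integral from 0 to 1 of u^n (1-u)^n / ((a-b)u + (a+1)b)^(n+1) du. -/
theorem stmt8 (a b : ℝ) (hb : 0 < b) (hab : b < a) (n : ℕ)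
    (f : ℝ → ℝ) (hf : ∀ x, f x = b * (1 - x) / (b + x)) :
    Set.BijOn f (Set.Icc (0:ℝ) 1) (Set.Icc (0:ℝ) 1) ∧
    (∀ x ∈ Set.Icc (0:ℝ) 1, DifferentiableAt ℝ f x) ∧
    f 0 = 1 ∧ f 1 = 0 ∧
    (∀ x ∈ Set.Icc (0:ℝ) 1,
      (f x) ^ n * (1 - f x) ^ n / ((a - b) * f x + (a + 1) * b) ^ (n + 1)
          * (b * (b + 1) / (b + x) ^ 2)
        = x ^ n * (1 - x) ^ n / ((x + a) * (x + b)) ^ (n + 1)) ∧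
    (∫ x in (0:ℝ)..1, x ^ n * (1 - x) ^ n / ((x + a) * (x + b)) ^ (n + 1)
      = ∫ u in (0:ℝ)..1, u ^ n * (1 - u) ^ n / ((a - b) * u + (a + 1) * b) ^ (n + 1)) := by
  have ha : 0 < a := hb.trans hab
  have hbx : ∀ x : ℝ, x ∈ Set.Icc (0:ℝ) 1 → 0 < b + x := fun x hx => by
    have := hx.1; linarith
  -- f maps [0,1] to [0,1]
  have hmaps : Set.MapsTo f (Set.Icc (0:ℝ) 1) (Set.Icc (0:ℝ) 1) := by
    intro x hx
    obtain ⟨hx0, hx1⟩ := hx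
    have hd := hbx x ⟨hx0, hx1⟩
    rw [hf]
    constructor
    · apply div_nonneg _ hd.le; nlinarith
    · rw [div_le_one hd]; nlinarith
  have hinv : ∀ x ∈ Set.Icc (0:ℝ) 1, f (f x) = x := by
    intro x hx
    have hd := hbx x hx
    have hnn : 0 ≤ b * (1 - x) / (b + x) := div_nonneg (by nlinarith [hx.2]) hd.le
    have hd' : 0 < b + b * (1 - x) / (b + x) := by linarith
    rw [hf (f x), hf x]
    rw [div_eq_iff hd'.ne']
    field_simp
    ring
  have hbij : Set.BijOn f (Set.Icc (0:ℝ) 1) (Set.Icc (0:ℝ) 1) := by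
    have : Set.InvOn f f (Set.Icc (0:ℝ) 1) (Set.Icc (0:ℝ) 1) := ⟨hinv, hinv⟩
    exact this.bijOn hmaps hmaps
  -- derivative
  have hderiv : ∀ x ∈ Set.Icc (0:ℝ) 1,
      HasDerivAt f (-(b * (b + 1) / (b + x) ^ 2)) x := by
    intro x hx
    have hd := (hbx x hx).ne'
    have h1 : HasDerivAt (fun x : ℝ => b * (1 - x)) (-b) x := by
      simpa using ((hasDerivAt_id x).const_sub 1).const_mul b
    have h2 : HasDerivAt (fun x : ℝ => b + x) 1 x := by
      simpa using (hasDerivAt_id x).const_add b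
    have := h1.div h2 hd
    have heq : (fun y : ℝ => b * (1 - y) / (b + y)) = f := by
      funext y; rw [hf]
    rw [show ((fun y : ℝ => b * (1 - y)) / fun y : ℝ => b + y) = f from funext fun y => (hf y).symm] at this
    refine this.congr_deriv ?_
    ring
  have hdiff : ∀ x ∈ Set.Icc (0:ℝ) 1, DifferentiableAt ℝ f x :=
    fun x hx => (hderiv x hx).differentiableAt
  have hf0 : f 0 = 1 := by rw [hf]; field_simp; simp
  have hf1 : f 1 = 0 := by rw [hf]; simp
  -- pointwise identity
  have hpt : ∀ x ∈ Set.Icc (0:ℝ) 1,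
      (f x) ^ n * (1 - f x) ^ n / ((a - b) * f x + (a + 1) * b) ^ (n + 1)
          * (b * (b + 1) / (b + x) ^ 2)
        = x ^ n * (1 - x) ^ n / ((x + a) * (x + b)) ^ (n + 1) := by
    intro x hx
    have hd := hbx x hx
    have hxa : 0 < x + a := by have := hx.1; linarith
    have hxb : 0 < x + b := by have := hx.1; linarith
    rw [hf]
    have hfx : b * (1 - x) / (b + x) = b * (1 - x) / (b + x) := rfl
    have hkey : (a - b) * (b * (1 - x) / (b + x)) + (a + 1) * b
        = b * (b + 1) * (a + x) / (b + x) := by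
      field_simp; ring
    have h1f : 1 - b * (1 - x) / (b + x) = x * (b + 1) / (b + x) := by
      field_simp; ring
    have hfv : b * (1 - x) / (b + x) = b * (1 - x) / (b + x) := rfl
    rw [hkey, h1f]
    have h1 : (b + x) ≠ 0 := hd.ne'
    have hax : (0:ℝ) < a + x := by linarith
    have hb1 : (0:ℝ) < b + 1 := by linarith
    simp only [mul_pow, div_pow]
    field_simp
    ring
  refine ⟨hbij, hdiff, hf0, hf1, hpt, ?_⟩
  -- the integral substitution
  set g : ℝ → ℝ := fun u => u ^ n * (1 - u) ^ n / ((a - b) * u + (a + 1) * b) ^ (n + 1) with hg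
  have huIcc : Set.uIcc (0:ℝ) 1 = Set.Icc (0:ℝ) 1 := by
    rw [Set.uIcc_of_le]; norm_num
  have hgcont : ContinuousOn g (f '' Set.uIcc (0:ℝ) 1) := by
    have hsub : f '' Set.uIcc (0:ℝ) 1 ⊆ Set.Icc (0:ℝ) 1 := by
      rw [huIcc]; exact hmaps.image_subset
    refine ContinuousOn.mono ?_ hsub
    apply ContinuousOn.div (by fun_prop) (by fun_prop)
    intro u hu
    have : (0:ℝ) < (a - b) * u + (a + 1) * b := by
      have := hu.1; nlinarith
    positivity
  have h' : ContinuousOn (fun x : ℝ => -(b * (b + 1) / (b + x) ^ 2)) (Set.uIcc (0:ℝ) 1) := by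
    rw [huIcc]
    apply ContinuousOn.neg
    apply ContinuousOn.div (by fun_prop) (by fun_prop)
    intro x hx
    exact pow_ne_zero _ (hbx x hx).ne'
  have hsubst := intervalIntegral.integral_comp_smul_deriv'
    (f := f) (f' := fun x => -(b * (b + 1) / (b + x) ^ 2)) (g := g)
    (fun x hx => hderiv x (huIcc ▸ hx)) h' hgcont
  rw [hf0, hf1] at hsubst
  have hL : (∫ x in (0:ℝ)..1, (-(b * (b + 1) / (b + x) ^ 2)) • (g ∘ f) x)
      = -∫ x in (0:ℝ)..1, x ^ n * (1 - x) ^ n / ((x + a) * (x + b)) ^ (n + 1) := by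
    rw [← intervalIntegral.integral_neg]
    apply intervalIntegral.integral_congr
    intro x hx
    rw [huIcc] at hx
    simp only [smul_eq_mul, Function.comp, hg, neg_mul, neg_neg]
    rw [← hpt x hx]
    ring
  rw [hL, intervalIntegral.integral_symm (0:ℝ) 1] at hsubst
  linarith [hsubst]
end
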